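/- Let Q be a finite quiver with no oriented cycles and fix vertices i ≠ j and indices v ≤ d_i, u ≤ d_j. Every monomial ∏_{l≤n} X_{α_l,p_l,q_l} of multidegree e_{i,v} − e_{j,u} is, up to permutation of factors, of the form X_{α_m,u,p_{m−1}}·X_{α_{m−1},p_{m−1},p_{m−2}}·…·X_{α_1,p_1,v} where α_m…α_1 is a path in Q from i to j; i.e., the variables concatenate to a path with matching intermediate indices. -/

import Mathlib

/-- The multidegree of the variable `X_{α,p,q}` (for `α : i ⟶ j`, `p ≤ d j`, `q ≤ d i`):
`e_{(s α, q)} - e_{(t α, p)}` in `ℤ^{Q̃₀}`. -/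
noncomputable def degOf {Q : Type*} [Quiver Q] (d : Q → ℕ)
    (x : Σ (i : Q) (j : Q) (_ : i ⟶ j), Fin (d j) × Fin (d i)) :
    (Σ i : Q, Fin (d i)) →₀ ℤ :=
  Finsupp.single ⟨x.1, x.2.2.2.2⟩ 1 - Finsupp.single ⟨x.2.1, x.2.2.2.1⟩ 1

/-- A list of variables `X_{α,p,q}` forms a "chain" from `src` to `tgt`: the source datum
of the first variable is `src`, the target datum of each variable matches the source
datum of the next, and the target datum of the last variable is `tgt`. -/
def linksFrom {Q : Type*} [Quiver Q] (d : Q → ℕ) :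
    (Σ i : Q, Fin (d i)) → List (Σ (i : Q) (j : Q) (_ : i ⟶ j), Fin (d j) × Fin (d i)) →
      (Σ i : Q, Fin (d i)) → Prop
  | src, [], tgt => src = tgt
  | src, x :: L, tgt =>
      (⟨x.1, x.2.2.2.2⟩ : Σ i : Q, Fin (d i)) = src ∧
        linksFrom d ⟨x.2.1, x.2.2.2.1⟩ L tgt

namespace Stmt8Aux

attribute [local instance] Classical.propDecidable

lemma list_sum_nonpos : ∀ (l : List ℤ), (∀ a ∈ l, a ≤ 0) → l.sum ≤ 0
  | [], _ => le_rfl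
  | a :: l, h => by
      simp only [List.sum_cons]
      have := list_sum_nonpos l (fun b hb => h b (List.mem_cons_of_mem _ hb))
      have ha := h a List.mem_cons_self
      omega

variable {Q : Type*} [Quiver Q] (d : Q → ℕ)

abbrev E (Q : Type*) [Quiver Q] (d : Q → ℕ) :=
  Σ (i : Q) (j : Q) (_ : i ⟶ j), Fin (d j) × Fin (d i)

def srcOf (x : E Q d) : Σ i : Q, Fin (d i) := ⟨x.1, x.2.2.2.2⟩
def tgtOf (x : E Q d) : Σ i : Q, Fin (d i) := ⟨x.2.1, x.2.2.2.1⟩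

lemma sum_apply (L : List (E Q d)) (w : Σ i : Q, Fin (d i)) :
    (L.map (degOf d)).sum w =
      (L.map (fun x => (if srcOf d x = w then (1:ℤ) else 0) -
        if tgtOf d x = w then 1 else 0)).sum := by
  induction L with
  | nil => simp
  | cons x L ih =>
      simp only [List.map_cons, List.sum_cons, Finsupp.add_apply, ih]
      congr 1
      simp [degOf, Finsupp.single_apply, srcOf, tgtOf]
      congr

lemma length_cast {u v u' v' : Q} (hu : u = u') (hv : v = v') (p : Quiver.Path u v) :
    (p.cast hu hv).length = p.length := by
  subst hu; subst hv; rfl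

/-- In a monomial of degree 0, every "target" vertex datum is also a "source". -/
lemma balanced (L : List (E Q d)) (h : (L.map (degOf d)).sum = 0)
    (x : E Q d) (hx : x ∈ L) : ∃ y ∈ L, srcOf d y = tgtOf d x := by
  by_contra hno
  push_neg at hno
  have h0 : (L.map (degOf d)).sum (tgtOf d x) = 0 := by rw [h]; rfl
  rw [sum_apply] at h0
  have hperm : L.Perm (x :: L.erase x) := (List.perm_cons_erase hx)
  rw [(hperm.map _).sum_eq] at h0
  simp only [List.map_cons, List.sum_cons] at h0
  rw [if_neg (hno x hx)] at h0
  have h2 : ((L.erase x).map (fun y => (if srcOf d y = tgtOf d x then (1:ℤ) else 0) -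
      if tgtOf d y = tgtOf d x then 1 else 0)).sum ≤ 0 := by
    apply list_sum_nonpos
    intro a ha
    simp only [List.mem_map] at ha
    obtain ⟨y, hy, rfl⟩ := ha
    rw [if_neg (hno y (List.erase_subset hy))]
    split <;> norm_num
  norm_num at h0
  linarith

lemma nil_of_sum_zero (hacyc : ∀ (i : Q) (p : Quiver.Path i i), p.length = 0)
    (L : List (E Q d)) (h : (L.map (degOf d)).sum = 0) : L = [] := by
  by_contra hL
  obtain ⟨x₀, hx₀⟩ := List.exists_mem_of_ne_nil L hL
  -- successor function on edges of L
  let f : {x : E Q d // x ∈ L} → {x : E Q d // x ∈ L} := fun x =>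
    ⟨(balanced d L h x.1 x.2).choose, (balanced d L h x.1 x.2).choose_spec.1⟩
  have hf : ∀ x, srcOf d (f x).1 = tgtOf d x.1 :=
    fun x => (balanced d L h x.1 x.2).choose_spec.2
  let g : ℕ → {x : E Q d // x ∈ L} := fun n => f^[n] ⟨x₀, hx₀⟩
  have hg : ∀ n, srcOf d (g (n+1)).1 = tgtOf d (g n).1 := by
    intro n
    have : g (n+1) = f (g n) := Function.iterate_succ_apply' f n _
    rw [this]; exact hf _
  -- vertex sequence
  let a : ℕ → Q := fun n => (g n).1.1
  have hv : ∀ n, a (n+1) = (g n).1.2.1 := by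
    intro n
    have := congrArg Sigma.fst (hg n)
    simpa [srcOf, tgtOf, a] using this
  let arr : ∀ n, a n ⟶ a (n+1) := fun n =>
    Quiver.Hom.cast rfl (hv n).symm (g n).1.2.2.1
  -- paths of any length
  let P : ∀ (k m : ℕ), Quiver.Path (a m) (a (m+k)) := fun k => by
    induction k with
    | zero => exact fun m => Quiver.Path.nil
    | succ k ih => exact fun m => (ih m).cons (arr (m+k))
  have hP : ∀ k m, (P k m).length = k := by
    intro k
    induction k with
    | zero => intro m; rfl
    | succ k ih =>
        intro m
        show ((P k m).cons (arr (m+k))).length = k + 1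
        rw [Quiver.Path.length_cons, ih m]
  -- injectivity of a
  have hinj : ∀ m k : ℕ, a m = a (m + (k+1)) → False := by
    intro m k hmk
    have hq := hacyc (a m) ((P (k+1) m).cast rfl hmk.symm)
    rw [length_cast, hP (k+1) m] at hq
    omega
  have ainj : Function.Injective a := by
    intro m n hmn
    rcases lt_trichotomy m n with hlt | heq | hlt
    · exact absurd hmn (by
        obtain ⟨k, rfl⟩ : ∃ k, n = m + (k+1) := ⟨n - m - 1, by omega⟩
        exact fun hh => hinj m k hh)
    · exact heq
    · exact absurd hmn.symm (by
        obtain ⟨k, rfl⟩ : ∃ k, m = n + (k+1) := ⟨m - n - 1, by omega⟩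
        exact fun hh => hinj n k hh)
  -- but the range of a is finite
  have hsub : Set.range a ⊆ ↑((L.map (fun x => x.1)).toFinset) := by
    rintro b ⟨n, rfl⟩
    simp only [Finset.coe_sort_coe, List.coe_toFinset, Set.mem_setOf_eq, List.mem_map]
    exact ⟨(g n).1, (g n).2, rfl⟩
  exact (Set.infinite_range_of_injective ainj)
    (Set.Finite.subset ((L.map (fun x => x.1)).toFinset.finite_toSet) hsub)

lemma main (hacyc : ∀ (i : Q) (p : Quiver.Path i i), p.length = 0) :
    ∀ (n : ℕ) (L : List (E Q d)) (src tgt : Σ i : Q, Fin (d i)), L.length = n →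
      (L.map (degOf d)).sum = Finsupp.single src 1 - Finsupp.single tgt 1 →
      ∃ L', L.Perm L' ∧ linksFrom d src L' tgt := by
  intro n
  induction n using Nat.strong_induction_on with
  | _ n ih =>
      intro L src tgt hlen hdeg
      by_cases hst : src = tgt
      · subst hst
        have : (L.map (degOf d)).sum = 0 := by rw [hdeg]; simp
        have hLnil := nil_of_sum_zero d hacyc L this
        subst hLnil
        exact ⟨[], List.Perm.refl _, rfl⟩
      · -- find a first edge
        have hcoef : (L.map (degOf d)).sum src = 1 := by
          rw [hdeg]
          simp [Finsupp.single_apply, Ne.symm hst]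
        rw [sum_apply] at hcoef
        have hex : ∃ x ∈ L, srcOf d x = src := by
          by_contra hno
          push_neg at hno
          have : (L.map (fun x => (if srcOf d x = src then (1:ℤ) else 0) -
              if tgtOf d x = src then 1 else 0)).sum ≤ 0 := by
            apply list_sum_nonpos
            intro b hb
            simp only [List.mem_map] at hb
            obtain ⟨y, hy, rfl⟩ := hb
            rw [if_neg (hno y hy)]
            split <;> norm_num
          linarith
        obtain ⟨x, hx, hsx⟩ := hex
        have hperm : L.Perm (x :: L.erase x) := List.perm_cons_erase hx
        have hdeg' : ((L.erase x).map (degOf d)).sum =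
            Finsupp.single (tgtOf d x) 1 - Finsupp.single tgt 1 := by
          have := (hperm.map (degOf d)).sum_eq
          simp only [List.map_cons, List.sum_cons] at this
          rw [this] at hdeg
          have hdx : degOf d x = Finsupp.single src 1 - Finsupp.single (tgtOf d x) 1 := by
            rw [degOf, ← hsx]; rfl
          rw [hdx] at hdeg
          -- hdeg : single src - single (tgtOf x) + rest = single src - single tgt
          linear_combination (norm := abel) hdeg
        have hlen' : (L.erase x).length < n := by
          rw [← hlen]
          have h1 : (L.erase x).length = L.length - 1 := List.length_erase_of_mem hx
          have h2 : 0 < L.length := List.length_pos_iff.mpr (List.ne_nil_of_mem hx)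
          omega
        obtain ⟨L'', hperm'', hlinks⟩ :=
          ih _ hlen' (L.erase x) (tgtOf d x) tgt rfl hdeg'
        refine ⟨x :: L'', hperm.trans (hperm''.cons x), ?_⟩
        exact ⟨hsx, hlinks⟩

end Stmt8Aux

/-- If `Q` has no oriented cycles, then every monomial of multidegree
`e_{(i,v)} - e_{(j,u)}` is, up to a permutation of its factors, a product
`X_{α_m,u,p_{m-1}} ⋯ X_{α_1,p_1,v}` whose variables concatenate to a path
`α_m…α_1` in `Q` from `i` to `j` with matching intermediate indices. -/
theorem stmt8 {Q : Type*} [Quiver Q] (d : Q → ℕ)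
    (hacyc : ∀ (i : Q) (p : Quiver.Path i i), p.length = 0)
    (i j : Q) (hij : i ≠ j) (v : Fin (d i)) (u : Fin (d j))
    (L : List (Σ (i : Q) (j : Q) (_ : i ⟶ j), Fin (d j) × Fin (d i)))
    (hdeg : (L.map (degOf d)).sum =
      Finsupp.single ⟨i, v⟩ 1 - Finsupp.single ⟨j, u⟩ 1) :
    ∃ L', L.Perm L' ∧ linksFrom d ⟨i, v⟩ L' ⟨j, u⟩ := by
  exact Stmt8Aux.main d hacyc L.length L ⟨i, v⟩ ⟨j, u⟩ rfl hdeg
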